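/- For three spinors z₁, z₂, z₃ ∈ ℂ² and three spinors w₁, w₂, w₃ ∈ ℂ², and complex parameters τ, τ' with the Gaussian integral convergent, ∫_{ℂ²} exp(τ Σ_{1≤i<j≤3} [z_i|z_j⟩[w_i|w_j⟩ − ττ' Σ_{i=1}^{3} ⟨z₄|z_i⟩[w_i|z₄⟩) dμ(z₄) = exp(τ Σ_{i<j≤3}[z_i|z_j⟩[w_i|w_j⟩) / (1 − ττ' Σ_{i=1}^{3} [z_i|w_i⟩ + τ²τ'² Σ_{1≤i<j≤3} [z_i|z_j⟩[w_i|w_j⟩). -/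

import Mathlib

set_option maxHeartbeats 1000000

open MeasureTheory Real

/-- The holomorphic skew bracket `[x|y⟩ = x₀y₁ − x₁y₀` of two spinors in ℂ². -/
noncomputable def skb (x y : ℂ × ℂ) : ℂ := x.1 * y.2 - x.2 * y.1

/-- The Hermitian inner product `⟨x|y⟩ = conj(x₀)y₀ + conj(x₁)y₁` on ℂ². -/
noncomputable def herm (x y : ℂ × ℂ) : ℂ :=
  starRingEnd ℂ x.1 * y.1 + starRingEnd ℂ x.2 * y.2

lemma gauss1 (a b c : ℂ) (ha : 0 < a.re) :
    ∫ u : ℂ, Complex.exp (b * (starRingEnd ℂ) u + c * u - a * ((starRingEnd ℂ) u * u))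
      = ↑π / a * Complex.exp (b * c / a) := by
  have ha0 : a ≠ 0 := fun h => by simp [h] at ha
  rw [← MeasurePreserving.integral_comp' (f := Complex.measurableEquivRealProd.symm)
      Complex.volume_preserving_equiv_real_prod.symm]
  have key : ∀ p : ℝ × ℝ,
      Complex.exp (b * (starRingEnd ℂ) (Complex.measurableEquivRealProd.symm p)
        + c * (Complex.measurableEquivRealProd.symm p)
        - a * ((starRingEnd ℂ) (Complex.measurableEquivRealProd.symm p)
          * (Complex.measurableEquivRealProd.symm p)))
      = Complex.exp (-a * (p.1:ℂ)^2 + (b + c) * p.1 + 0)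
        * Complex.exp (-a * (p.2:ℂ)^2 + ((c - b) * Complex.I) * p.2 + 0) := by
    intro p
    rw [← Complex.exp_add]
    congr 1
    have h1 : (Complex.measurableEquivRealProd.symm p : ℂ) = (p.1 : ℂ) + (p.2 : ℂ) * Complex.I := by
      simp [Complex.measurableEquivRealProd_symm_apply, Complex.mk_eq_add_mul_I]
    rw [h1]
    simp only [map_add, map_mul, Complex.conj_ofReal, Complex.conj_I]
    ring_nf
    simp [Complex.I_sq]
    ring
  simp_rw [key]
  rw [MeasureTheory.Measure.volume_eq_prod ℝ ℝ, MeasureTheory.integral_prod_mul (fun t : ℝ => Complex.exp (-a * (t:ℂ)^2 + (b + c) * t + 0)) (fun t : ℝ => Complex.exp (-a * (t:ℂ)^2 + ((c - b) * Complex.I) * t + 0))]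
  rw [integral_cexp_quadratic (by simpa using ha) (b + c) 0,
    integral_cexp_quadratic (by simpa using ha) ((c - b) * Complex.I) 0]
  have hπa : (↑π / a : ℂ) ≠ 0 := div_ne_zero (by exact_mod_cast Real.pi_ne_zero) ha0
  rw [neg_neg]
  calc (π / a : ℂ) ^ (1 / 2 : ℂ) * Complex.exp (0 - (b + c) ^ 2 / (4 * -a)) *
        ((π / a : ℂ) ^ (1 / 2 : ℂ) * Complex.exp (0 - ((c - b) * Complex.I) ^ 2 / (4 * -a)))
      = ((π / a : ℂ) ^ (1 / 2 : ℂ) * (π / a : ℂ) ^ (1 / 2 : ℂ)) *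
        Complex.exp ((0 - (b + c) ^ 2 / (4 * -a)) + (0 - ((c - b) * Complex.I) ^ 2 / (4 * -a))) := by
        rw [Complex.exp_add]; ring
    _ = ↑π / a * Complex.exp (b * c / a) := by
        rw [← Complex.cpow_add _ _ hπa]
        norm_num
        have : ((c - b) * Complex.I) ^ 2 = -((c - b) ^ 2) := by
          rw [mul_pow, Complex.I_sq]; ring
        rw [this]
        field_simp
        ring_nf
        tauto

lemma integrable_gaussC {ε : ℝ} (hε : 0 < ε) :
    Integrable (fun u : ℂ => Real.exp (-ε * ‖u‖ ^ 2)) := by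
  rw [← (Complex.volume_preserving_equiv_real_prod.symm).integrable_comp_emb
      (Complex.measurableEquivRealProd.symm.measurableEmbedding)]
  have key : ((fun u : ℂ => Real.exp (-ε * ‖u‖ ^ 2)) ∘ Complex.measurableEquivRealProd.symm)
      = fun p : ℝ × ℝ => Real.exp (-ε * p.1 ^ 2) * Real.exp (-ε * p.2 ^ 2) := by
    funext p
    simp only [Function.comp_apply, ← Real.exp_add]
    congr 1
    have : ‖Complex.measurableEquivRealProd.symm p‖ ^ 2 = p.1 ^ 2 + p.2 ^ 2 := by
      rw [← Complex.normSq_eq_norm_sq]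
      simp [Complex.measurableEquivRealProd_symm_apply, Complex.normSq_mk]; ring
    rw [this]; ring
  rw [key, MeasureTheory.Measure.volume_eq_prod ℝ ℝ]
  exact (integrable_exp_neg_mul_sq hε).mul_prod (integrable_exp_neg_mul_sq hε)

theorem stmt_17 (z w : Fin 3 → ℂ × ℂ) (τ τ' : ℂ)
    (hconv : ‖τ * τ'‖ * ∑ i : Fin 3, 2 * ‖z i‖ * ‖w i‖ < 1) :
    ∫ ζ : ℂ × ℂ,
      ((π : ℂ) ^ 2)⁻¹ *
        Complex.exp
          (τ * (∑ i : Fin 3, ∑ j ∈ Finset.Ioi i, skb (z i) (z j) * skb (w i) (w j))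
            - τ * τ' * (∑ i : Fin 3, herm ζ (z i) * skb (w i) ζ)
            - herm ζ ζ)
    = Complex.exp
        (τ * (∑ i : Fin 3, ∑ j ∈ Finset.Ioi i, skb (z i) (z j) * skb (w i) (w j))) /
      (1 - τ * τ' * (∑ i : Fin 3, skb (z i) (w i))
        + τ ^ 2 * τ' ^ 2 *
          (∑ i : Fin 3, ∑ j ∈ Finset.Ioi i, skb (z i) (z j) * skb (w i) (w j))) := by
  -- abbreviations
  set C : ℂ := τ * (∑ i : Fin 3, ∑ j ∈ Finset.Ioi i, skb (z i) (z j) * skb (w i) (w j)) with hCdef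
  set P : ℂ := ∑ i : Fin 3, (z i).1 * (w i).2 with hPdef
  set Q : ℂ := ∑ i : Fin 3, (z i).1 * (w i).1 with hQdef
  set R : ℂ := ∑ i : Fin 3, (z i).2 * (w i).2 with hRdef
  set Sm : ℂ := ∑ i : Fin 3, (z i).2 * (w i).1 with hSmdef
  set t : ℝ := ∑ i : Fin 3, ‖z i‖ * ‖w i‖ with htdef
  set r : ℝ := ‖τ * τ'‖ * t with hrdef
  have ht0 : 0 ≤ t := Finset.sum_nonneg fun i _ => mul_nonneg (norm_nonneg _) (norm_nonneg _)
  have hr0 : 0 ≤ r := mul_nonneg (norm_nonneg _) ht0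
  have hr2 : 2 * r < 1 := by
    have : ∑ i : Fin 3, 2 * ‖z i‖ * ‖w i‖ = 2 * t := by
      rw [htdef, Finset.mul_sum]; exact Finset.sum_congr rfl fun i _ => by ring
    rw [this] at hconv; rw [hrdef]; nlinarith [norm_nonneg (τ * τ')]
  have h1r : (0:ℝ) < 1 - r := by linarith
  -- norm bounds on the coefficient sums
  have key_bound : ∀ (s1 s2 : ℂ × ℂ → ℂ), (∀ x : ℂ × ℂ, ‖s1 x‖ ≤ ‖x‖) →
      (∀ x : ℂ × ℂ, ‖s2 x‖ ≤ ‖x‖) → ‖∑ i : Fin 3, s1 (z i) * s2 (w i)‖ ≤ t := by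
    intro s1 s2 h1 h2
    refine (norm_sum_le _ _).trans (Finset.sum_le_sum fun i _ => ?_)
    rw [norm_mul]
    exact mul_le_mul (h1 _) (h2 _) (norm_nonneg _) (norm_nonneg _)
  have hP : ‖P‖ ≤ t := key_bound _ _ (fun x => norm_fst_le x) (fun x => norm_snd_le x)
  have hQ : ‖Q‖ ≤ t := key_bound _ _ (fun x => norm_fst_le x) (fun x => norm_fst_le x)
  have hR : ‖R‖ ≤ t := key_bound _ _ (fun x => norm_snd_le x) (fun x => norm_snd_le x)
  have hSm : ‖Sm‖ ≤ t := key_bound _ _ (fun x => norm_snd_le x) (fun x => norm_fst_le x)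
  have hnormr : ∀ X : ℂ, ‖X‖ ≤ t → ‖τ * τ' * X‖ ≤ r := by
    intro X hX
    rw [norm_mul, hrdef]
    exact mul_le_mul_of_nonneg_left hX (norm_nonneg _)
  -- the matrix entries
  set D : ℂ := 1 + τ * τ' * Sm with hDdef
  set A : ℂ := 1 - τ * τ' * P with hAdef
  have hDre : 1 - r ≤ D.re := by
    have h1 : |(τ * τ' * Sm).re| ≤ r := (Complex.abs_re_le_norm _).trans (hnormr _ hSm)
    rw [hDdef]
    simp only [Complex.add_re, Complex.one_re]
    have := abs_le.mp h1
    linarith [this.1]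
  have hD : 0 < D.re := lt_of_lt_of_le h1r hDre
  have hDne : D ≠ 0 := fun h => by simp [h] at hD
  have hDnorm : 1 - r ≤ ‖D‖ := hDre.trans (Complex.re_le_norm D)
  set a₂ : ℂ := A + τ ^ 2 * τ' ^ 2 * Q * R / D with ha₂def
  have hQRb : ‖τ ^ 2 * τ' ^ 2 * Q * R / D‖ ≤ r ^ 2 / (1 - r) := by
    have h1 : ‖τ ^ 2 * τ' ^ 2 * Q * R‖ ≤ r ^ 2 := by
      have e : τ ^ 2 * τ' ^ 2 * Q * R = (τ * τ' * Q) * (τ * τ' * R) := by ring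
      rw [e, norm_mul]
      calc ‖τ * τ' * Q‖ * ‖τ * τ' * R‖ ≤ r * r :=
            mul_le_mul (hnormr _ hQ) (hnormr _ hR) (norm_nonneg _) hr0
        _ = r ^ 2 := (sq r).symm
    rw [norm_div]
    exact div_le_div₀ (by positivity) h1 h1r hDnorm
  have ha₂ : 0 < a₂.re := by
    have hAre : 1 - r ≤ A.re := by
      have h1 : |(τ * τ' * P).re| ≤ r := (Complex.abs_re_le_norm _).trans (hnormr _ hP)
      rw [hAdef]
      simp only [Complex.sub_re, Complex.one_re]
      have := abs_le.mp h1
      linarith [this.2]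
    have h2 : |(τ ^ 2 * τ' ^ 2 * Q * R / D).re| ≤ r ^ 2 / (1 - r) :=
      (Complex.abs_re_le_norm _).trans hQRb
    have h3 : r ^ 2 / (1 - r) < 1 - r := by
      rw [div_lt_iff₀ h1r]
      nlinarith
    have h4 := (abs_le.mp h2).1
    rw [ha₂def]
    simp only [Complex.add_re]
    linarith
  have ha₂ne : a₂ ≠ 0 := fun h => by simp [h] at ha₂
  -- exponent expansion
  have hS : ∀ u v : ℂ, (∑ i : Fin 3, herm (u, v) (z i) * skb (w i) (u, v))
      = (starRingEnd ℂ u * u) * (-P) + (starRingEnd ℂ u * v) * Q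
        + (starRingEnd ℂ v * u) * (-R) + (starRingEnd ℂ v * v) * Sm := by
    intro u v
    simp only [herm, skb, hPdef, hQdef, hRdef, hSmdef, Fin.sum_univ_three]
    ring
  -- the integrand
  set F : ℂ × ℂ → ℂ := fun ζ =>
    ((π : ℂ) ^ 2)⁻¹ *
      Complex.exp (C - τ * τ' * (∑ i : Fin 3, herm ζ (z i) * skb (w i) ζ) - herm ζ ζ)
    with hFdef
  -- norm bound on the quadratic form
  have hSb : ∀ u v : ℂ, ‖∑ i : Fin 3, herm (u, v) (z i) * skb (w i) (u, v)‖
      ≤ (2 * ‖u‖ ^ 2 + 2 * ‖v‖ ^ 2) * t := by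
    intro u v
    refine (norm_sum_le _ _).trans ?_
    rw [htdef, Finset.mul_sum]
    refine Finset.sum_le_sum fun i _ => ?_
    rw [norm_mul]
    have h1 : ‖herm (u, v) (z i)‖ ≤ (‖u‖ + ‖v‖) * ‖z i‖ := by
      simp only [herm]
      refine (norm_add_le _ _).trans ?_
      rw [norm_mul, norm_mul, RCLike.norm_conj, RCLike.norm_conj]
      have := norm_fst_le (z i); have := norm_snd_le (z i)
      nlinarith [norm_nonneg u, norm_nonneg v, norm_nonneg (z i), norm_fst_le (z i),
        norm_snd_le (z i), norm_nonneg (z i).1, norm_nonneg (z i).2]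
    have h2 : ‖skb (w i) (u, v)‖ ≤ (‖u‖ + ‖v‖) * ‖w i‖ := by
      simp only [skb]
      refine (norm_sub_le _ _).trans ?_
      rw [norm_mul, norm_mul]
      nlinarith [norm_nonneg u, norm_nonneg v, norm_nonneg (w i), norm_fst_le (w i),
        norm_snd_le (w i), norm_nonneg (w i).1, norm_nonneg (w i).2]
    calc ‖herm (u, v) (z i)‖ * ‖skb (w i) (u, v)‖
        ≤ ((‖u‖ + ‖v‖) * ‖z i‖) * ((‖u‖ + ‖v‖) * ‖w i‖) :=
          mul_le_mul h1 h2 (norm_nonneg _) (by positivity)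
      _ = (‖u‖ + ‖v‖) ^ 2 * (‖z i‖ * ‖w i‖) := by ring
      _ ≤ (2 * ‖u‖ ^ 2 + 2 * ‖v‖ ^ 2) * (‖z i‖ * ‖w i‖) := by
          have : (‖u‖ + ‖v‖) ^ 2 ≤ 2 * ‖u‖ ^ 2 + 2 * ‖v‖ ^ 2 := by
            nlinarith [sq_nonneg (‖u‖ - ‖v‖)]
          exact mul_le_mul_of_nonneg_right this (by positivity)
  have hherm : ∀ x : ℂ × ℂ, (herm x x).re = ‖x.1‖ ^ 2 + ‖x.2‖ ^ 2 := by
    intro x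
    simp only [herm, Complex.add_re, Complex.mul_re, Complex.conj_re, Complex.conj_im,
      Complex.sq_norm, Complex.normSq_apply]
    ring
  -- integrability
  set ε : ℝ := 1 - 2 * r with hεdef
  have hε : 0 < ε := by rw [hεdef]; linarith
  have hFi : Integrable F ((volume : Measure ℂ).prod (volume : Measure ℂ)) := by
    have hg : Integrable (fun ζ : ℂ × ℂ =>
        ((π ^ 2)⁻¹ * Real.exp C.re) *
          (Real.exp (-ε * ‖ζ.1‖ ^ 2) * Real.exp (-ε * ‖ζ.2‖ ^ 2)))
        ((volume : Measure ℂ).prod (volume : Measure ℂ)) :=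
      ((integrable_gaussC hε).mul_prod (integrable_gaussC hε)).const_mul _
    refine hg.mono' ?_ ?_
    · apply Continuous.aestronglyMeasurable
      apply Continuous.mul continuous_const
      apply Complex.continuous_exp.comp
      simp only [herm, skb]
      have hc1 : Continuous fun ζ : ℂ × ℂ => (starRingEnd ℂ) ζ.1 :=
        RCLike.continuous_conj.comp continuous_fst
      have hc2 : Continuous fun ζ : ℂ × ℂ => (starRingEnd ℂ) ζ.2 :=
        RCLike.continuous_conj.comp continuous_snd
      refine (continuous_const.sub (continuous_const.mul
        (continuous_finset_sum _ fun i _ => Continuous.mul ?_ ?_))).sub ?_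
      · exact (hc1.mul continuous_const).add (hc2.mul continuous_const)
      · exact (continuous_const.mul continuous_snd).sub (continuous_const.mul continuous_fst)
      · exact (hc1.mul continuous_fst).add (hc2.mul continuous_snd)
    · refine Filter.Eventually.of_forall fun ζ => ?_
      rw [hFdef]
      simp only
      rw [norm_mul, Complex.norm_exp]
      have hπn : ‖((π : ℂ) ^ 2)⁻¹‖ = (π ^ 2)⁻¹ := by
        rw [norm_inv, norm_pow, Complex.norm_real]
        simp [abs_of_nonneg Real.pi_nonneg]
      rw [hπn]
      have hre : (C - τ * τ' * (∑ i : Fin 3, herm ζ (z i) * skb (w i) ζ) - herm ζ ζ).re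
          ≤ C.re - ε * ‖ζ.1‖ ^ 2 - ε * ‖ζ.2‖ ^ 2 := by
        simp only [Complex.sub_re]
        rw [hherm ζ]
        have h1 : -(τ * τ' * (∑ i : Fin 3, herm ζ (z i) * skb (w i) ζ)).re
            ≤ ‖τ * τ'‖ * ((2 * ‖ζ.1‖ ^ 2 + 2 * ‖ζ.2‖ ^ 2) * t) := by
          refine (neg_le_abs _).trans ?_
          refine (Complex.abs_re_le_norm _).trans ?_
          rw [norm_mul]
          refine mul_le_mul_of_nonneg_left ?_ (norm_nonneg _)
          have := hSb ζ.1 ζ.2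
          simpa using this
        have hrt : ‖τ * τ'‖ * ((2 * ‖ζ.1‖ ^ 2 + 2 * ‖ζ.2‖ ^ 2) * t)
            = 2 * r * (‖ζ.1‖ ^ 2 + ‖ζ.2‖ ^ 2) := by rw [hrdef]; ring
        rw [hrt] at h1
        rw [hεdef]
        nlinarith [h1]
      calc (π ^ 2)⁻¹ * Real.exp ((C - τ * τ' * (∑ i : Fin 3, herm ζ (z i) * skb (w i) ζ)
              - herm ζ ζ).re)
          ≤ (π ^ 2)⁻¹ * Real.exp (C.re - ε * ‖ζ.1‖ ^ 2 - ε * ‖ζ.2‖ ^ 2) := by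
            refine mul_le_mul_of_nonneg_left (Real.exp_le_exp.mpr hre) (by positivity)
        _ = (π ^ 2)⁻¹ * Real.exp C.re * (Real.exp (-ε * ‖ζ.1‖ ^ 2) * Real.exp (-ε * ‖ζ.2‖ ^ 2)) := by
            rw [show C.re - ε * ‖ζ.1‖ ^ 2 - ε * ‖ζ.2‖ ^ 2
                = C.re + (-ε * ‖ζ.1‖ ^ 2 + -ε * ‖ζ.2‖ ^ 2) from by ring,
              Real.exp_add, Real.exp_add]; ring
        _ ≤ _ := le_refl _
  -- compute the iterated integral
  have goal_lhs : (∫ ζ : ℂ × ℂ, F ζ) = Complex.exp C / (D * A + τ ^ 2 * τ' ^ 2 * Q * R) := by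
    rw [MeasureTheory.Measure.volume_eq_prod ℂ ℂ, MeasureTheory.integral_prod _ hFi]
    have inner : ∀ u : ℂ, (∫ v : ℂ, F (u, v))
        = (((π : ℂ) ^ 2)⁻¹ * Complex.exp C * ((π : ℂ) / D)) *
          Complex.exp ((0 : ℂ) * (starRingEnd ℂ) u + 0 * u - a₂ * ((starRingEnd ℂ) u * u)) := by
      intro u
      have expand : ∀ v : ℂ, F (u, v)
          = (((π : ℂ) ^ 2)⁻¹ * Complex.exp (C - A * ((starRingEnd ℂ) u * u))) *
            Complex.exp ((τ * τ' * R * u) * (starRingEnd ℂ) v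
              + (-(τ * τ' * Q * ((starRingEnd ℂ) u))) * v - D * ((starRingEnd ℂ) v * v)) := by
        intro v
        rw [hFdef]
        simp only
        conv_rhs => rw [mul_assoc, ← Complex.exp_add]
        congr 1
        rw [hS u v]
        simp only [herm, hDdef, hAdef]
        ring
      simp_rw [expand]
      rw [MeasureTheory.integral_const_mul,
        gauss1 D (τ * τ' * R * u) (-(τ * τ' * Q * ((starRingEnd ℂ) u))) hD]
      have hexp : Complex.exp (C - A * ((starRingEnd ℂ) u * u)) *
          Complex.exp (τ * τ' * R * u * -(τ * τ' * Q * (starRingEnd ℂ) u) / D)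
          = Complex.exp C *
            Complex.exp ((0 : ℂ) * (starRingEnd ℂ) u + 0 * u - a₂ * ((starRingEnd ℂ) u * u)) := by
        rw [← Complex.exp_add, ← Complex.exp_add]
        congr 1
        rw [ha₂def]
        field_simp
        ring
      linear_combination (((π : ℂ) ^ 2)⁻¹ * ((π : ℂ) / D)) * hexp
    simp_rw [inner]
    rw [MeasureTheory.integral_const_mul, gauss1 a₂ 0 0 ha₂]
    have hπ0 : (π : ℂ) ≠ 0 := by exact_mod_cast Real.pi_ne_zero
    have hDA : D * a₂ = D * A + τ ^ 2 * τ' ^ 2 * Q * R := by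
      rw [ha₂def]; field_simp
    rw [← hDA]
    simp only [zero_mul, zero_div, Complex.exp_zero, mul_one]
    field_simp
  -- identify the denominator
  have hden : (1 : ℂ) - τ * τ' * (∑ i : Fin 3, skb (z i) (w i))
      + τ ^ 2 * τ' ^ 2 *
        (∑ i : Fin 3, ∑ j ∈ Finset.Ioi i, skb (z i) (z j) * skb (w i) (w j))
      = D * A + τ ^ 2 * τ' ^ 2 * Q * R := by
    have hIoi0 : Finset.Ioi (0 : Fin 3) = {1, 2} := by decide
    have hIoi1 : Finset.Ioi (1 : Fin 3) = {2} := by decide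
    have hIoi2 : Finset.Ioi (2 : Fin 3) = (∅ : Finset (Fin 3)) := by decide
    rw [hDdef, hAdef, hPdef, hQdef, hRdef, hSmdef]
    simp only [skb, Fin.sum_univ_three, hIoi0, hIoi1, hIoi2,
      Finset.sum_pair (by decide : (1 : Fin 3) ≠ 2), Finset.sum_singleton, Finset.sum_empty]
    ring
  rw [hden]
  exact goal_lhs
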